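/- Let M be a positive (10,9)-reverse multiple. Then there exist an integer i ≥ 1 and nonnegative integers l_1, …, l_i and m_1, …, m_i such that, writing C_j for the digit block '10' followed by l_j nines followed by '89' and Z_j for a block of m_j zeros, the big-endian decimal digit string of M is either the palindromic concatenation C_1 Z_1 C_2 Z_2 … C_{i-1} Z_{i-1} C_i Z_i C_i Z_{i-1} C_{i-1} … Z_1 C_1 (with 2i blocks C and central zero block Z_i) or the palindromic concatenation C_1 Z_1 … C_{i-1} Z_{i-1} C_i Z_{i-1} C_{i-1} … Z_1 C_1 (with 2i−1 blocks C and central block C_i). -/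

import Mathlib

/-- The big-endian digit block `10 9…9 89` with `l` nines. -/
def cBlock9 (l : ℕ) : List ℕ := [1, 0] ++ List.replicate l 9 ++ [8, 9]

/-- A block of `m` zero digits. -/
def zBlock (m : ℕ) : List ℕ := List.replicate m 0

/-- The big-endian digit string
`C_1 Z_1 … C_{i-1} Z_{i-1} C_i Z_i C_i Z_{i-1} C_{i-1} … Z_1 C_1`
(with `2 * i` blocks `C` and central zero block `Z_i`), where `C_j` is the block
`10 9…9 89` with `l j` nines and `Z_j` is a block of `m j` zeros (indices `1, …, i`). -/
def evenString9 (i : ℕ) (l m : ℕ → ℕ) : List ℕ :=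
  ((List.range i).map fun j => cBlock9 (l (j + 1)) ++ zBlock (m (j + 1))).flatten ++
    cBlock9 (l i) ++
    (((List.range (i - 1)).map fun j =>
        zBlock (m (j + 1)) ++ cBlock9 (l (j + 1))).reverse).flatten

/-- The big-endian digit string
`C_1 Z_1 … C_{i-1} Z_{i-1} C_i Z_{i-1} C_{i-1} … Z_1 C_1`
(with `2 * i - 1` blocks `C` and central block `C_i`). -/
def oddString9 (i : ℕ) (l m : ℕ → ℕ) : List ℕ :=
  ((List.range (i - 1)).map fun j => cBlock9 (l (j + 1)) ++ zBlock (m (j + 1))).flatten ++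
    cBlock9 (l i) ++
    (((List.range (i - 1)).map fun j =>
        zBlock (m (j + 1)) ++ cBlock9 (l (j + 1))).reverse).flatten


section ReverseMultipleAux
open List

local notation "V" => Nat.ofDigits 10


lemma two_ends (v : List ℕ) (h : 2 ≤ v.length) : ∃ x q y, v = x :: q ++ [y] := by
  cases v with
  | nil => simp at h
  | cons x t =>
    rcases t.eq_nil_or_concat with rfl | ⟨q, y, rfl⟩
    · simp at h
    · exact ⟨x, q, y, by simp⟩

lemma peel_eq (x y : ℕ) (v : List ℕ) :
    V (x :: v ++ [y]) = x + (10 * V v + 10 * 10 ^ v.length * y) := by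
  rw [show x :: v ++ [y] = x :: (v ++ [y]) from rfl, Nat.ofDigits_cons, Nat.ofDigits_append,
    Nat.ofDigits_singleton]
  ring

lemma peel_rev (x y : ℕ) (v : List ℕ) : (x :: v ++ [y]).reverse = y :: v.reverse ++ [x] := by
  simp

lemma peel_len (x y : ℕ) (v : List ℕ) : (x :: v ++ [y]).length = v.length + 2 := by simp

lemma vbound (v : List ℕ) (hv : ∀ d ∈ v, d < 10) : V v < 10 ^ v.length :=
  Nat.ofDigits_lt_base_pow_length (by norm_num) hv

lemma vbound_rev (v : List ℕ) (hv : ∀ d ∈ v, d < 10) : V v.reverse < 10 ^ v.length := by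
  rw [← List.length_reverse]
  exact vbound _ (by intro d hd; exact hv d (by simpa using hd))

/-- R3 analysis. -/
lemma aux3 (v : List ℕ) (hv : ∀ d ∈ v, d < 10)
    (h : 9 * V v = V v.reverse + 8 * 10 ^ v.length) :
    ∃ r, (∀ d ∈ r, d < 10) ∧ V r.reverse = 9 * V r ∧ v = 1 :: r ++ [9] := by
  match v, hv, h with
  | [], hv, h => simp [Nat.ofDigits] at h
  | [d], hv, h =>
    exfalso
    have hd : d < 10 := hv d (by simp)
    simp [Nat.ofDigits] at h
    omega
  | (a :: b :: t), hv, h =>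
    obtain ⟨x, q, y, hxy⟩ := two_ends (a :: b :: t) (by simp)
    rw [hxy] at h hv ⊢
    have hx : x < 10 := hv x (by simp)
    have hy : y < 10 := hv y (by simp)
    have hq : ∀ d ∈ q, d < 10 := fun d hd => hv d (by simp [hd])
    have hVq := vbound q hq
    have hVqr := vbound_rev q hq
    have hQ : 1 ≤ 10 ^ q.length := Nat.one_le_pow _ _ (by norm_num)
    rw [peel_rev, peel_eq, peel_eq, peel_len, List.length_reverse, pow_succ, pow_succ] at h
    have hxy1 : x = 1 ∧ y = 9 := by interval_cases x <;> interval_cases y <;> omega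
    obtain ⟨rfl, rfl⟩ := hxy1
    exact ⟨q, hq, by omega, rfl⟩

lemma ofDigits_replicate_zero (m : ℕ) : V (replicate m 0) = 0 := by
  induction m with
  | zero => simp [Nat.ofDigits]
  | succ k ih => simp [replicate_succ, Nat.ofDigits_cons, ih]

lemma ofDigits_zeros_append (m : ℕ) (l : List ℕ) :
    V (replicate m 0 ++ l) = 10 ^ m * V l := by
  rw [Nat.ofDigits_append, ofDigits_replicate_zero, length_replicate]; ring


lemma ofDigits_append_zeros (m : ℕ) (l : List ℕ) :
    V (l ++ replicate m 0) = V l := by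
  rw [Nat.ofDigits_append, ofDigits_replicate_zero]; ring


lemma ofDigits_mod_ten (x : ℕ) (l : List ℕ) (hx : x < 10) :
    V (x :: l) % 10 = x := by
  rw [Nat.ofDigits_cons]; omega


lemma lead_zeros (r : List ℕ) : ∃ m r2, r = replicate m 0 ++ r2 ∧ (r2 = [] ∨ r2.head? ≠ some 0) := by
  induction r with
  | nil => exact ⟨0, [], by simp⟩
  | cons a t ih =>
    by_cases ha : a = 0
    · obtain ⟨m, r2, h1, h2⟩ := ih
      exact ⟨m + 1, r2, by simp [replicate_succ, h1, ha], h2⟩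
    · exact ⟨0, a :: t, by simp, Or.inr (by simp [ha])⟩


/-- R4 analysis. -/
lemma aux4 (r : List ℕ) (hv : ∀ d ∈ r, d < 10) (h : V r.reverse = 9 * V r) :
    (∃ z, r = replicate z 0) ∨
    (∃ m q, q ≠ [] ∧ (∀ d ∈ q, d < 10) ∧ q.head? ≠ some 0 ∧ q.getLast? ≠ some 0 ∧
      V q.reverse = 9 * V q ∧ r = replicate m 0 ++ q ++ replicate m 0) := by
  obtain ⟨m, r2, rfl, h2⟩ := lead_zeros r
  by_cases hr2nil : r2 = []
  · exact Or.inl ⟨m, by simp [hr2nil]⟩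
  have hh : r2.head? ≠ some 0 := h2.resolve_left hr2nil
  right
  obtain ⟨m', t, ht, h3⟩ := lead_zeros r2.reverse
  have hr2 : r2 = t.reverse ++ replicate m' 0 := by
    have := congrArg List.reverse ht
    simpa [List.reverse_replicate] using this
  have htne : t ≠ [] := by
    rintro rfl
    rw [hr2] at hh hr2nil
    cases m' with
    | zero => simp at hr2nil
    | succ k => simp [replicate_succ] at hh
  have hth : t.head? ≠ some 0 := h3.resolve_left htne
  set q := t.reverse with hq
  have hqne : q ≠ [] := by simpa [hq] using htne
  -- values
  have hVr : V (replicate m 0 ++ r2) = 10 ^ m * V q := by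
    rw [ofDigits_zeros_append, hr2, ofDigits_append_zeros]
  have hVrr : V (replicate m 0 ++ r2).reverse = 10 ^ m' * V q.reverse := by
    rw [List.reverse_append, List.reverse_replicate, hr2, List.reverse_append,
      List.reverse_replicate, List.append_assoc, ofDigits_zeros_append,
      ofDigits_append_zeros]
  rw [hVr, hVrr] at h
  have hvq : ∀ d ∈ q, d < 10 := by
    intro d hd
    apply hv
    rw [hr2]
    exact List.mem_append_right _ (List.mem_append_left _ hd)
  have hq0 : q.head? ≠ some 0 := by
    obtain ⟨a, s, has⟩ := List.exists_cons_of_ne_nil hqne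
    rw [hr2, has] at hh
    rw [has]
    simpa using hh
  have hqL : q.getLast? ≠ some 0 := by
    rw [hq, List.getLast?_reverse]
    exact hth
  have hVq10 : V q % 10 ≠ 0 := by
    obtain ⟨a, s, has⟩ := List.exists_cons_of_ne_nil hqne
    rw [has, ofDigits_mod_ten a s (hvq a (by rw [has]; simp))]
    rw [has] at hq0
    simpa using hq0
  have hVqr10 : V q.reverse % 10 ≠ 0 := by
    have hqrne : q.reverse ≠ [] := by simpa using hqne
    obtain ⟨a, s, has⟩ := List.exists_cons_of_ne_nil hqrne
    have ha : a < 10 := hvq a (by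
      have : a ∈ q.reverse := by rw [has]; simp
      simpa using this)
    rw [has, ofDigits_mod_ten a s ha]
    have := hqL
    rw [← List.head?_reverse, has] at this
    simpa using this
  have hmm : m = m' := by
    rcases Nat.lt_trichotomy m m' with hlt | heq | hgt
    · exfalso
      obtain ⟨k, hk⟩ : ∃ k, m' = m + (k + 1) := ⟨m' - m - 1, by omega⟩
      rw [hk] at h
      have hp : 0 < 10 ^ m := Nat.pow_pos (by norm_num)
      have hc : 10 ^ (k + 1) * V q.reverse = 9 * V q := by
        apply Nat.eq_of_mul_eq_mul_left hp
        rw [← mul_assoc, ← pow_add, h]; ring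
      have hdvd : 10 ∣ 9 * V q := ⟨10 ^ k * V q.reverse, by rw [← hc, pow_succ]; ring⟩
      omega
    · exact heq
    · exfalso
      obtain ⟨k, hk⟩ : ∃ k, m = m' + (k + 1) := ⟨m - m' - 1, by omega⟩
      rw [hk] at h
      have hp : 0 < 10 ^ m' := Nat.pow_pos (by norm_num)
      have hc : V q.reverse = 10 ^ (k + 1) * (9 * V q) := by
        apply Nat.eq_of_mul_eq_mul_left hp
        rw [h, pow_add]; ring
      have hdvd : 10 ∣ V q.reverse := ⟨10 ^ k * (9 * V q), by rw [hc, pow_succ]; ring⟩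
      omega
  subst hmm
  have hfin : V q.reverse = 9 * V q := by
    have hp : 0 < 10 ^ m := Nat.pow_pos (by norm_num)
    apply Nat.eq_of_mul_eq_mul_left hp
    rw [h]; ring
  exact ⟨m, q, hqne, hvq, hq0, hqL, hfin, by rw [hr2, hq, List.append_assoc]⟩


/-- R2 analysis: the main block-peeling recursion. -/
lemma aux2 : ∀ (n : ℕ) (w : List ℕ), w.length ≤ n → (∀ d ∈ w, d < 10) →
    9 * V w + 8 = V w.reverse + 8 * 10 ^ w.length →
    (∃ a, w = replicate a 9) ∨
    (∃ a m, w = replicate a 9 ++ [0, 1] ++ replicate m 0 ++ [9, 8] ++ replicate a 9) ∨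
    (∃ a m q, q ≠ [] ∧ (∀ d ∈ q, d < 10) ∧ q.head? ≠ some 0 ∧ q.getLast? ≠ some 0 ∧
      V q.reverse = 9 * V q ∧
      w = replicate a 9 ++ [0, 1] ++ replicate m 0 ++ q ++ replicate m 0 ++ [9, 8] ++
        replicate a 9) := by
  intro n
  induction n with
  | zero =>
    intro w hlen _ _
    have : w = [] := List.eq_nil_of_length_eq_zero (by omega)
    exact Or.inl ⟨0, by simp [this]⟩
  | succ n ih =>
    intro w hlen hv h
    match w, hlen, hv, h with
    | [], _, _, _ => exact Or.inl ⟨0, by simp⟩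
    | [d], _, hv, h =>
      have hd : d < 10 := hv d (by simp)
      have : d = 9 := by simp [Nat.ofDigits] at h; omega
      exact Or.inl ⟨1, by simp [this]⟩
    | (a :: b :: t), hlen, hv, h =>
      obtain ⟨x, v, y, hxy⟩ := two_ends (a :: b :: t) (by simp)
      rw [hxy] at h hv hlen ⊢
      have hx : x < 10 := hv x (by simp)
      have hy : y < 10 := hv y (by simp)
      have hvv : ∀ d ∈ v, d < 10 := fun d hd => hv d (by simp [hd])
      have hVv := vbound v hvv
      have hVvr := vbound_rev v hvv
      have hQ : 1 ≤ 10 ^ v.length := Nat.one_le_pow _ _ (by norm_num)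
      rw [peel_rev, peel_eq, peel_eq, peel_len, List.length_reverse, pow_succ, pow_succ] at h
      have hkey : (x = 9 ∧ y = 9) ∨ (x = 0 ∧ y = 8) := by
        interval_cases x <;> interval_cases y <;> omega
      rcases hkey with ⟨rfl, rfl⟩ | ⟨rfl, rfl⟩
      · -- peel a 9 from each side, recurse
        have hR2v : 9 * V v + 8 = V v.reverse + 8 * 10 ^ v.length := by omega
        have hlv : v.length ≤ n := by simp at hlen; omega
        rcases ih v hlv hvv hR2v with ⟨a, rfl⟩ | ⟨a, m, rfl⟩ | ⟨a, m, q, h1, h2, h3, h4, h5, rfl⟩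
        · left
          refine ⟨a + 2, ?_⟩
          rw [show a + 2 = (a + 1) + 1 from rfl, List.replicate_succ, List.replicate_succ']
          simp
        · right; left
          refine ⟨a + 1, m, ?_⟩
          nth_rewrite 1 [List.replicate_succ]
          nth_rewrite 1 [List.replicate_succ']
          simp [List.append_assoc]
        · right; right
          refine ⟨a + 1, m, q, h1, h2, h3, h4, h5, ?_⟩
          nth_rewrite 1 [List.replicate_succ]
          nth_rewrite 1 [List.replicate_succ']
          simp [List.append_assoc]
      · -- inner 0 … 8 : apply aux3 then aux4
        have hR3v : 9 * V v = V v.reverse + 8 * 10 ^ v.length := by omega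
        obtain ⟨r, hr, hrv, rfl⟩ := aux3 v hvv hR3v
        rcases aux4 r hr hrv with ⟨z, rfl⟩ | ⟨m, q, h1, h2, h3, h4, h5, rfl⟩
        · right; left
          exact ⟨0, z, by simp⟩
        · right; right
          refine ⟨0, m, q, h1, h2, h3, h4, h5, ?_⟩
          simp [List.append_assoc]

inductive Lang9 : List ℕ → Prop
  | base (l : ℕ) : Lang9 (cBlock9 l)
  | pair (l m : ℕ) : Lang9 (cBlock9 l ++ zBlock m ++ cBlock9 l)
  | cons (l m : ℕ) (u : List ℕ) : Lang9 u → Lang9 (cBlock9 l ++ zBlock m ++ u ++ zBlock m ++ cBlock9 l)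


lemma lang_of_rev : ∀ (n : ℕ) (s : List ℕ), s.length ≤ n → (∀ d ∈ s, d < 10) → s ≠ [] →
    s.head? ≠ some 0 → s.getLast? ≠ some 0 → V s.reverse = 9 * V s → Lang9 s.reverse := by
  intro n
  induction n with
  | zero =>
    intro s hlen _ hne _ _ _
    exact absurd (List.eq_nil_of_length_eq_zero (by omega)) hne
  | succ n ih =>
    intro s hlen hv hne hhd hlast heq
    match s, hlen, hv, hne, hhd, hlast, heq with
    | [d], _, hv, _, hhd, _, heq =>
      exfalso
      have hd0 : d = 0 := by
        simp only [List.reverse_singleton, Nat.ofDigits_singleton] at heq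
        omega
      simp [hd0] at hhd
    | (a :: b :: t), hlen, hv, hne, hhd, hlast, heq =>
      obtain ⟨x, u, y, hxy⟩ := two_ends (a :: b :: t) (by simp)
      rw [hxy] at hlen hv hhd hlast heq ⊢
      have hx : x < 10 := hv x (by simp)
      have hy : y < 10 := hv y (by simp)
      have hx0 : x ≠ 0 := by simpa using hhd
      have hy0 : y ≠ 0 := by
        rw [show x :: u ++ [y] = (x :: u) ++ [y] from rfl, List.getLast?_concat] at hlast
        simpa using hlast
      have hvu : ∀ d ∈ u, d < 10 := fun d hd => hv d (by simp [hd])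
      have hVu := vbound u hvu
      have hVur := vbound_rev u hvu
      have hQ : 1 ≤ 10 ^ u.length := Nat.one_le_pow _ _ (by norm_num)
      rw [peel_rev, peel_eq, peel_eq, List.length_reverse] at heq
      have hxy91 : x = 9 ∧ y = 1 := by
        interval_cases x <;> interval_cases y <;> omega
      obtain ⟨rfl, rfl⟩ := hxy91
      have hR1 : V u.reverse = 9 * V u + 8 := by omega
      -- now peel u
      match u, hvu, hVu, hVur, hQ, hR1, hlen with
      | [], _, _, _, _, hR1, _ =>
        exfalso
        simp only [List.reverse_nil, Nat.ofDigits_nil] at hR1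
        omega
      | [d], hvu, _, _, _, hR1, _ =>
        exfalso
        simp only [List.reverse_singleton, Nat.ofDigits_singleton] at hR1
        omega
      | (c :: e :: t2), hvu, _, _, _, hR1, hlen =>
        obtain ⟨x', w, y', hxy'⟩ := two_ends (c :: e :: t2) (by simp)
        rw [hxy'] at hvu hR1 hlen ⊢
        have hx' : x' < 10 := hvu x' (by simp)
        have hy' : y' < 10 := hvu y' (by simp)
        have hvw : ∀ d ∈ w, d < 10 := fun d hd => hvu d (by simp [hd])
        have hVw := vbound w hvw
        have hVwr := vbound_rev w hvw
        have hQ' : 1 ≤ 10 ^ w.length := Nat.one_le_pow _ _ (by norm_num)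
        rw [peel_rev, peel_eq, peel_eq, List.length_reverse] at hR1
        have hxy80 : x' = 8 ∧ y' = 0 := by
          interval_cases x' <;> interval_cases y' <;> omega
        obtain ⟨rfl, rfl⟩ := hxy80
        have hR2 : 9 * V w + 8 = V w.reverse + 8 * 10 ^ w.length := by omega
        have hlw : w.length ≤ n := by simp at hlen; omega
        have e0 : (9 :: (8 :: w ++ [0]) ++ [1]).reverse = [1, 0] ++ w.reverse ++ [8, 9] := by
          simp
        rw [e0]
        rcases aux2 n w hlw hvw hR2 with ⟨a, rfl⟩ | ⟨a, m, rfl⟩ |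
          ⟨a, m, q, h1, h2, h3, h4, h5, rfl⟩
        · have e1 : [1, 0] ++ (replicate a 9).reverse ++ [8, 9] = cBlock9 a := by
            simp [cBlock9, List.reverse_replicate]
          rw [e1]; exact Lang9.base a
        · have e2 : [1, 0] ++ (replicate a 9 ++ [0, 1] ++ replicate m 0 ++ [9, 8] ++
              replicate a 9).reverse ++ [8, 9] = cBlock9 a ++ zBlock m ++ cBlock9 a := by
            simp [cBlock9, zBlock, List.reverse_replicate, List.append_assoc]
          rw [e2]; exact Lang9.pair a m
        · have hq : Lang9 q.reverse := by
            apply ih q ?_ h2 h1 h3 h4 h5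
            simp at hlen
            omega
          have e3 : [1, 0] ++ (replicate a 9 ++ [0, 1] ++ replicate m 0 ++ q ++ replicate m 0
              ++ [9, 8] ++ replicate a 9).reverse ++ [8, 9] =
              cBlock9 a ++ zBlock m ++ q.reverse ++ zBlock m ++ cBlock9 a := by
            simp [cBlock9, zBlock, List.reverse_replicate, List.append_assoc]
          rw [e3]; exact Lang9.cons a m q.reverse hq

lemma oddOne (l m : ℕ → ℕ) : oddString9 1 l m = cBlock9 (l 1) := by
  simp [oddString9]

lemma evenOne (l m : ℕ → ℕ) :
    evenString9 1 l m = cBlock9 (l 1) ++ zBlock (m 1) ++ cBlock9 (l 1) := by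
  simp [evenString9, List.range_succ, List.append_assoc]

lemma evenPeel (k : ℕ) (l m : ℕ → ℕ) :
    evenString9 (k + 2) l m = cBlock9 (l 1) ++ zBlock (m 1) ++
      evenString9 (k + 1) (fun j => l (j + 1)) (fun j => m (j + 1)) ++ zBlock (m 1) ++
      cBlock9 (l 1) := by
  simp only [evenString9, show k + 2 - 1 = k + 1 from rfl, show k + 1 - 1 = k from rfl,
    List.range_succ_eq_map, List.map_cons, List.map_map, List.flatten_cons,
    List.reverse_cons, List.flatten_append, List.flatten_cons, List.flatten_nil,
    List.append_nil, Function.comp_def, Nat.succ_eq_add_one]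
  simp [List.append_assoc]

lemma oddPeel (k : ℕ) (l m : ℕ → ℕ) :
    oddString9 (k + 2) l m = cBlock9 (l 1) ++ zBlock (m 1) ++
      oddString9 (k + 1) (fun j => l (j + 1)) (fun j => m (j + 1)) ++ zBlock (m 1) ++
      cBlock9 (l 1) := by
  simp only [oddString9, show k + 2 - 1 = k + 1 from rfl, show k + 1 - 1 = k from rfl,
    List.range_succ_eq_map, List.map_cons, List.map_map, List.flatten_cons,
    List.reverse_cons, List.flatten_append, List.flatten_cons, List.flatten_nil,
    List.append_nil, Function.comp_def, Nat.succ_eq_add_one]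
  simp [List.append_assoc]

lemma evenCongr (i : ℕ) (hi : 1 ≤ i) (l l' m m' : ℕ → ℕ)
    (hl : ∀ j, 1 ≤ j → l j = l' j) (hm : ∀ j, 1 ≤ j → m j = m' j) :
    evenString9 i l m = evenString9 i l' m' := by
  have h1 : (List.range i).map (fun j => cBlock9 (l (j + 1)) ++ zBlock (m (j + 1))) =
      (List.range i).map (fun j => cBlock9 (l' (j + 1)) ++ zBlock (m' (j + 1))) :=
    List.map_congr_left (fun j _ => by rw [hl (j+1) (by omega), hm (j+1) (by omega)])
  have h2 : (List.range (i-1)).map (fun j => zBlock (m (j + 1)) ++ cBlock9 (l (j + 1))) =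
      (List.range (i-1)).map (fun j => zBlock (m' (j + 1)) ++ cBlock9 (l' (j + 1))) :=
    List.map_congr_left (fun j _ => by rw [hl (j+1) (by omega), hm (j+1) (by omega)])
  unfold evenString9
  rw [h1, h2, hl i hi]

lemma oddCongr (i : ℕ) (hi : 1 ≤ i) (l l' m m' : ℕ → ℕ)
    (hl : ∀ j, 1 ≤ j → l j = l' j) (hm : ∀ j, 1 ≤ j → m j = m' j) :
    oddString9 i l m = oddString9 i l' m' := by
  have h1 : (List.range (i-1)).map (fun j => cBlock9 (l (j + 1)) ++ zBlock (m (j + 1))) =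
      (List.range (i-1)).map (fun j => cBlock9 (l' (j + 1)) ++ zBlock (m' (j + 1))) :=
    List.map_congr_left (fun j _ => by rw [hl (j+1) (by omega), hm (j+1) (by omega)])
  have h2 : (List.range (i-1)).map (fun j => zBlock (m (j + 1)) ++ cBlock9 (l (j + 1))) =
      (List.range (i-1)).map (fun j => zBlock (m' (j + 1)) ++ cBlock9 (l' (j + 1))) :=
    List.map_congr_left (fun j _ => by rw [hl (j+1) (by omega), hm (j+1) (by omega)])
  unfold oddString9
  rw [h1, h2, hl i hi]

lemma lang_exists {s : List ℕ} (h : Lang9 s) :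
    ∃ i : ℕ, 1 ≤ i ∧ ∃ l m : ℕ → ℕ, s = evenString9 i l m ∨ s = oddString9 i l m := by
  induction h with
  | base l0 =>
    exact ⟨1, le_refl 1, fun _ => l0, fun _ => 0, Or.inr (oddOne (fun _ => l0) (fun _ => 0)).symm⟩
  | pair l0 m0 =>
    exact ⟨1, le_refl 1, fun _ => l0, fun _ => m0, Or.inl (evenOne (fun _ => l0) (fun _ => m0)).symm⟩
  | cons l0 m0 u hu ihu =>
    obtain ⟨i, hi, l, m, hc⟩ := ihu
    obtain ⟨k, rfl⟩ : ∃ k, i = k + 1 := ⟨i - 1, by omega⟩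
    refine ⟨k + 2, by omega, fun j => if j = 1 then l0 else l (j - 1),
      fun j => if j = 1 then m0 else m (j - 1), ?_⟩
    have hl : ∀ j, 1 ≤ j → (fun j => if j + 1 = 1 then l0 else l (j + 1 - 1)) j = l j := by
      intro j hj
      simp only [Nat.add_sub_cancel, if_neg (show ¬ j + 1 = 1 by omega)]
    have hm : ∀ j, 1 ≤ j → (fun j => if j + 1 = 1 then m0 else m (j + 1 - 1)) j = m j := by
      intro j hj
      simp only [Nat.add_sub_cancel, if_neg (show ¬ j + 1 = 1 by omega)]
    rcases hc with hc | hc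
    · left
      rw [evenPeel, evenCongr (k+1) (by omega) _ l _ m hl hm, ← hc]
      simp
    · right
      rw [oddPeel, oddCongr (k+1) (by omega) _ l _ m hl hm, ← hc]
      simp

end ReverseMultipleAux

/-- Every positive `(10, 9)`-reverse multiple has a big-endian decimal digit string
which is one of the two palindromic block concatenations built from blocks
`C_j = 10 9…9 89` (with `l j` nines) and zero blocks `Z_j` (of `m j` zeros). -/
theorem stmt_17 (M : ℕ) (hM : 0 < M)
    (hrev : (Nat.digits 10 M).reverse = Nat.digits 10 (9 * M)) :
    ∃ i : ℕ, 1 ≤ i ∧ ∃ l m : ℕ → ℕ,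
      (Nat.digits 10 M).reverse = evenString9 i l m ∨
      (Nat.digits 10 M).reverse = oddString9 i l m := by
  set s := Nat.digits 10 M with hs
  have hM9 : 9 * M ≠ 0 := by omega
  have hne : s ≠ [] := Nat.digits_ne_nil_iff_ne_zero.mpr (by omega)
  have hne9 : Nat.digits 10 (9 * M) ≠ [] := Nat.digits_ne_nil_iff_ne_zero.mpr hM9
  have hv : ∀ d ∈ s, d < 10 := fun d hd => Nat.digits_lt_base (by norm_num) hd
  have hlast : s.getLast? ≠ some 0 := by
    have h0 := Nat.getLast_digit_ne_zero 10 (show M ≠ 0 by omega)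
    rw [List.getLast?_eq_getLast hne]
    simpa using h0
  have hhead : s.head? ≠ some 0 := by
    have h9 := Nat.getLast_digit_ne_zero 10 hM9
    rw [← List.getLast?_reverse, hrev, List.getLast?_eq_getLast hne9]
    simpa using h9
  have heq : Nat.ofDigits 10 s.reverse = 9 * Nat.ofDigits 10 s := by
    rw [hrev, Nat.ofDigits_digits, Nat.ofDigits_digits]
  exact lang_exists (lang_of_rev s.length s le_rfl hv hne hhead hlast heq)
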